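/- For every planar graph G, fix(G) ≥ sqrt(free(G)). -/

import Mathlib

open Set

/-- A point in the plane. -/
abbrev Pt : Type := ℝ × ℝ

/-- The set of points occupied by a straight-line drawing `π` of `G`:
all vertex images together with all edge segments. -/
def drawSet {V : Type*} (G : SimpleGraph V) (π : V → Pt) : Set Pt :=
  Set.range π ∪ ⋃ (u : V) (v : V) (_ : G.Adj u v), segment ℝ (π u) (π v)

/-- `π` is a crossing-free straight-line drawing of `G`: it is injective, no vertex
lies on an edge segment other than at its endpoints, and two distinct edges meet
only in common endpoints. -/
def CrossFree {V : Type*} (G : SimpleGraph V) (π : V → Pt) : Prop :=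
  Function.Injective π ∧
  (∀ u v w : V, G.Adj u v → w ≠ u → w ≠ v → π w ∉ segment ℝ (π u) (π v)) ∧
  (∀ u v x y : V, G.Adj u v → G.Adj x y → s(u, v) ≠ s(x, y) →
    segment ℝ (π u) (π v) ∩ segment ℝ (π x) (π y) ⊆
      ({π u, π v} : Set Pt) ∩ ({π x, π y} : Set Pt))

/-- `G` is planar: it admits a crossing-free straight-line drawing. -/
def IsPlanarG {V : Type*} (G : SimpleGraph V) : Prop := ∃ π : V → Pt, CrossFree G π

/-- `G` is maximal planar (a triangulation): planar, and adding any edge destroys planarity. -/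
def MaxPlanar {V : Type*} (G : SimpleGraph V) : Prop :=
  IsPlanarG G ∧ ∀ u v : V, u ≠ v → ¬ G.Adj u v →
    ¬ IsPlanarG (G ⊔ SimpleGraph.fromEdgeSet {s(u, v)})

/-- The number of faces of a drawing: the number of connected components of the
complement of the drawing in the plane. -/
noncomputable def numFaces {V : Type*} (G : SimpleGraph V) (π : V → Pt) : ℕ :=
  Nat.card (ConnectedComponents ↥((drawSet G π)ᶜ))

/-- The set of points of a face (a connected component of the complement of the drawing). -/
def compSet {S : Set Pt} (c : ConnectedComponents ↥S) : Set Pt :=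
  {p | ∃ h : p ∈ S, ConnectedComponents.mk (⟨p, h⟩ : ↥S) = c}

/-- Number of vertices fixable when untangling a given drawing `π`. -/
noncomputable def fixDrawing {V : Type*} [Fintype V] (G : SimpleGraph V) (π : V → Pt) : ℕ :=
  sSup {m | ∃ π' : V → Pt, CrossFree G π' ∧ m = Nat.card {v : V | π' v = π v}}

/-- `fix G`: the minimum over all drawings of the number of fixable vertices. -/
noncomputable def fixNum {V : Type*} [Fintype V] (G : SimpleGraph V) : ℕ :=
  sInf {m | ∃ π : V → Pt, Function.Injective π ∧ m = fixDrawing G π}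

/-- `S` is a free collinear set in the crossing-free drawing `π`: its vertices lie on a
line, and any order-preserving displacement of them along the line extends to a
crossing-free redrawing of `G`. -/
def IsFreeSet {V : Type*} (G : SimpleGraph V) (π : V → Pt) (S : Set V) : Prop :=
  CrossFree G π ∧ ∃ (a d : Pt) (t : V → ℝ), d ≠ 0 ∧ (∀ v ∈ S, π v = a + t v • d) ∧
    ∀ t' : V → ℝ, (∀ u ∈ S, ∀ v ∈ S, t u < t v → t' u < t' v) →
      ∃ π' : V → Pt, CrossFree G π' ∧ ∀ v ∈ S, π' v = a + t' v • d

/-- `free G`: the largest size of a free collinear set over all crossing-free drawings. -/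
noncomputable def freeNum {V : Type*} (G : SimpleGraph V) : ℕ :=
  sSup {m | ∃ (π : V → Pt) (S : Set V), IsFreeSet G π S ∧ m = S.ncard}

/-- `lin G`: the largest number of collinear vertices over all crossing-free drawings. -/
noncomputable def linNum {V : Type*} (G : SimpleGraph V) : ℕ :=
  sSup {m | ∃ (π : V → Pt) (S : Set V), CrossFree G π ∧ Collinear ℝ (π '' S) ∧ m = S.ncard}

/-- The circumference of a graph: the length of a longest cycle. -/
noncomputable def circumference {V : Type*} (G : SimpleGraph V) : ℕ :=
  sSup {n | ∃ (v : V) (w : G.Walk v v), w.IsCycle ∧ w.length = n}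

/-- An almost layered crossing-free drawing: there are parallel lines (layers) such
that every vertex lies on a layer and every edge lies on one layer or joins two
consecutive layers. -/
def AlmostLayeredDrawing {V : Type*} (G : SimpleGraph V) (π : V → Pt) : Prop :=
  CrossFree G π ∧ ∃ (w : Pt) (c : ℕ → ℝ) (lay : V → ℕ), w ≠ 0 ∧ StrictMono c ∧
    (∀ v : V, (π v).1 * w.1 + (π v).2 * w.2 = c (lay v)) ∧
    ∀ u v : V, G.Adj u v → lay u = lay v ∨ lay u + 1 = lay v ∨ lay v + 1 = lay u

/-- An outerplanar drawing: crossing-free and all vertices lie on the outer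
(unbounded) face. -/
def OuterplanarDrawing {V : Type*} (G : SimpleGraph V) (π : V → Pt) : Prop :=
  CrossFree G π ∧ ∀ v : V, π v ∈ closure {p : Pt | p ∉ drawSet G π ∧
    ¬ Bornology.IsBounded (connectedComponentIn (drawSet G π)ᶜ p)}

/-- An outerplanar graph. -/
def Outerplanar {V : Type*} (G : SimpleGraph V) : Prop := ∃ π : V → Pt, OuterplanarDrawing G π

/-- The line through `a` with direction `d`. -/
def lineThrough (a d : Pt) : Set Pt := {p : Pt | ∃ t : ℝ, p = a + t • d}

/-- The faces of the drawing cut by the line through `a` with direction `d`. -/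
def cutFaces {V : Type*} (G : SimpleGraph V) (π : V → Pt) (a d : Pt) :
    Set (ConnectedComponents ↥((drawSet G π)ᶜ)) :=
  {c | ∃ p ∈ lineThrough a d, ∃ h : p ∈ (drawSet G π)ᶜ,
    ConnectedComponents.mk (⟨p, h⟩ : ↥((drawSet G π)ᶜ)) = c}

/-- The dual graph of a drawing: vertices are the faces, two faces being adjacent
iff they share an edge of the drawing. -/
def dualGraph {V : Type*} (G : SimpleGraph V) (π : V → Pt) :
    SimpleGraph (ConnectedComponents ↥((drawSet G π)ᶜ)) :=
  SimpleGraph.fromRel (fun c₁ c₂ => ∃ u v : V, G.Adj u v ∧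
    openSegment ℝ (π u) (π v) ⊆ closure (compSet c₁) ∩ closure (compSet c₂))



section ErdosSzekeres

variable {α : Type*} [LinearOrder α] {β : Type*}

open Function Finset

namespace Theorems100

/-- **Erdős–Szekeres Theorem**: Given a sequence of more than `r * s` distinct values, there is an
increasing sequence of length longer than `r` or a decreasing sequence of length longer than `s`.

Proof idea:
We label each value in the sequence with two numbers specifying the longest increasing
subsequence ending there, and the longest decreasing subsequence ending there.
We then show the pair of labels must be unique. Now if there is no increasing sequence longer than
`r` and no decreasing sequence longer than `s`, then there are at most `r * s` possible labels,
which is a contradiction if there are more than `r * s` elements.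
-/
theorem erdos_szekeres {r s n : ℕ} {f : Fin n → α} (hn : r * s < n) (hf : Injective f) :
    (∃ t : Finset (Fin n), r < #t ∧ StrictMonoOn f ↑t) ∨
      ∃ t : Finset (Fin n), s < #t ∧ StrictAntiOn f ↑t := by
  -- Given an index `i`, produce the set of increasing (resp., decreasing) subsequences which ends
  -- at `i`.
  let inc_sequences_ending_in : Fin n → Finset (Finset (Fin n)) := fun i =>
    univ.powerset.filter fun t => Finset.max t = i ∧ StrictMonoOn f ↑t
  let dec_sequences_ending_in : Fin n → Finset (Finset (Fin n)) := fun i =>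
    univ.powerset.filter fun t => Finset.max t = i ∧ StrictAntiOn f ↑t
  -- The singleton sequence is in both of the above collections.
  -- (This is useful to show that the maximum length subsequence is at least 1, and that the set
  -- of subsequences is nonempty.)
  have inc_i : ∀ i, {i} ∈ inc_sequences_ending_in i := fun i => by
    simp [inc_sequences_ending_in, StrictMonoOn]
  have dec_i : ∀ i, {i} ∈ dec_sequences_ending_in i := fun i => by
    simp [dec_sequences_ending_in, StrictAntiOn]
  -- Define the pair of labels: at index `i`, the pair is the maximum length of an increasing
  -- subsequence ending at `i`, paired with the maximum length of a decreasing subsequence ending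
  -- at `i`.
  -- We call these labels `(a_i, b_i)`.
  let ab' : Fin n → ℕ × ℕ := by
    intro i
    apply
      (max' ((inc_sequences_ending_in i).image card) (Nonempty.image ⟨{i}, inc_i i⟩ _),
        max' ((dec_sequences_ending_in i).image card) (Nonempty.image ⟨{i}, dec_i i⟩ _))
  -- Porting note: it costs many resources to unfold `ab'` so we obscure the definition:
  generalize hab : ab' = ab
  -- It now suffices to show that one of the labels is 'big' somewhere. In particular, if the
  -- first in the pair is more than `r` somewhere, then we have an increasing subsequence in our
  -- set, and if the second is more than `s` somewhere, then we have a decreasing subsequence.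
  rsuffices ⟨i, hi⟩ : ∃ i, r < (ab i).1 ∨ s < (ab i).2
  · refine Or.imp ?_ ?_ hi
    on_goal 1 =>
      have : (ab i).1 ∈ Finset.image card (inc_sequences_ending_in i) := by
        simp only [← hab]; exact max'_mem _ (Nonempty.image ⟨{i}, inc_i i⟩ _)
    on_goal 2 =>
      have : (ab i).2 ∈ Finset.image card (dec_sequences_ending_in i) := by
        simp only [← hab]; exact max'_mem _ (Nonempty.image ⟨{i}, dec_i i⟩ _)
    all_goals
      intro hi
      rw [Finset.mem_image] at this
      obtain ⟨t, ht₁, ht₂⟩ := this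
      refine ⟨t, by rwa [ht₂], ?_⟩
      rw [Finset.mem_filter] at ht₁
      apply ht₁.2.2
  -- Show first that the pair of labels is unique.
  have : Injective ab := by
    simp only [← hab]
    apply Injective.of_lt_imp_ne
    intro i j k q
    injection q with q₁ q₂
    -- We have two cases: `f i < f j` or `f j < f i`.
    -- In the former we'll show `a_i < a_j`, and in the latter we'll show `b_i < b_j`.
    cases lt_or_gt_of_ne fun _ => ne_of_lt ‹i < j› (hf ‹f i = f j›)
    on_goal 1 =>
      apply ne_of_lt _ q₁
      have : (ab' i).1 ∈ Finset.image card (inc_sequences_ending_in i) := by exact max'_mem _ (Nonempty.image ⟨{i}, inc_i i⟩ _)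
    on_goal 2 =>
      apply ne_of_lt _ q₂
      have : (ab' i).2 ∈ Finset.image card (dec_sequences_ending_in i) := by exact max'_mem _ (Nonempty.image ⟨{i}, dec_i i⟩ _)
    all_goals
      -- Reduce to showing there is a subsequence of length `a_i + 1` which ends at `j`.
      rw [Nat.lt_iff_add_one_le]
      apply le_max'
      rw [Finset.mem_image] at this ⊢
      -- In particular we take the subsequence `t` of length `a_i` which ends at `i`, by definition
      -- of `a_i`
      rcases this with ⟨t, ht₁, ht₂⟩
      rw [Finset.mem_filter] at ht₁
      -- Ensure `t` ends at `i`.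
      have : t.max = i := by simp only [ht₁.2.1]
      -- Now our new subsequence is given by adding `j` at the end of `t`.
      refine ⟨insert j t, ?_, ?_⟩
      -- First make sure it's valid, i.e., that this subsequence ends at `j` and is increasing
      · rw [Finset.mem_filter]
        refine ⟨?_, ?_, ?_⟩
        · rw [Finset.mem_powerset]; apply Finset.subset_univ
        -- It ends at `j` since `i < j`.
        · convert max_insert (a := j) (s := t)
          rw [ht₁.2.1, max_eq_left]
          apply WithBot.coe_le_coe.mpr (le_of_lt ‹i < j›)
        -- To show it's increasing (i.e., `f` is monotone increasing on `t.insert j`), we do cases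
        -- on what the possibilities could be - either in `t` or equals `j`.
        simp only [StrictMonoOn, StrictAntiOn, coe_insert, Set.mem_insert_iff, Finset.mem_coe]
        -- Most of the cases are just bashes.
        rintro x ⟨rfl | _⟩ y ⟨rfl | _⟩ _
        · apply (irrefl _ ‹j < j›).elim
        · exfalso
          apply not_le_of_gt (_root_.trans ‹i < j› ‹j < y›) (le_max_of_eq ‹y ∈ t› ‹t.max = i›)
        · first
          | apply lt_of_le_of_lt _ ‹f i < f j›
          | apply lt_of_lt_of_le ‹f j < f i› _
          rcases lt_or_eq_of_le (le_max_of_eq ‹x ∈ t› ‹t.max = i›) with (_ | rfl)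
          · apply le_of_lt (ht₁.2.2 ‹x ∈ t› (mem_of_max ‹t.max = i›) ‹x < i›)
          · rfl
        · apply ht₁.2.2 ‹x ∈ t› ‹y ∈ t› ‹x < y›
      -- Finally show that this new subsequence is one longer than the old one.
      · rw [card_insert_of_notMem, ht₂]
        intro
        apply not_le_of_gt ‹i < j› (le_max_of_eq ‹j ∈ t› ‹t.max = i›)
  -- Finished both goals!
  -- Now that we have uniqueness of each label, it remains to do some counting to finish off.
  -- Suppose all the labels are small.
  by_contra! q
  -- Then the labels `(a_i, b_i)` all fit in the following set: `{ (x,y) | 1 ≤ x ≤ r, 1 ≤ y ≤ s }`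
  let ran : Finset (ℕ × ℕ) := (Finset.range r).image Nat.succ ×ˢ (Finset.range s).image Nat.succ
  -- which we prove here.
  have : Finset.image ab Finset.univ ⊆ ran := by
    -- First some logical shuffling
    rintro ⟨x₁, x₂⟩
    simp only [ran, Finset.mem_image, exists_prop, Finset.mem_range, Finset.mem_univ, Finset.mem_product, true_and,
      Prod.ext_iff]
    rintro ⟨i, rfl, rfl⟩
    specialize q i
    -- Show `1 ≤ a_i` and `1 ≤ b_i`, which is easy from the fact that `{i}` is an increasing and
    -- decreasing subsequence which we did right near the top.
    have z : 1 ≤ (ab i).1 ∧ 1 ≤ (ab i).2 := by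
      simp only [← hab]
      constructor <;>
        · apply le_max'
          rw [Finset.mem_image]
          exact ⟨{i}, by solve_by_elim, Finset.card_singleton i⟩
    -- Need to get `a_i ≤ r`, here phrased as: there is some `a < r` with `a+1 = a_i`.
    exact ⟨⟨(ab i).1 - 1, by omega⟩, (ab i).2 - 1, by omega⟩
  -- To get our contradiction, it suffices to prove `n ≤ r * s`
  apply not_le_of_gt hn
  -- Which follows from considering the cardinalities of the subset above, since `ab` is injective.
  simpa [ran, Nat.succ_injective, Finset.card_image_of_injective, ‹Injective ab›] using Finset.card_le_card this

end Theorems100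

open Theorems100 in
lemma erdos_szekeres_finset {V : Type*} [DecidableEq V] (A : Finset V) (t s : V → ℝ)
    (ht : Set.InjOn t A) (hs : Set.InjOn s A) :
    ∃ B : Finset V, B ⊆ A ∧ A.card ≤ B.card * B.card ∧
      ((∀ u ∈ B, ∀ v ∈ B, t u < t v → s u < s v) ∨
       (∀ u ∈ B, ∀ v ∈ B, t u < t v → s v < s u)) := by
  classical
  rcases A.eq_empty_or_nonempty with rfl | hA
  · exact ⟨∅, by simp⟩
  set n := A.card with hn
  have hn1 : 1 ≤ n := Finset.card_pos.2 hA
  -- enumerate A in increasing t-order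
  set X := A.image t with hX
  have hXcard : X.card = n := Finset.card_image_of_injOn ht
  have o : Fin n ≃o X := X.orderIsoOfFin hXcard
  have hex : ∀ x ∈ X, ∃! v, v ∈ A ∧ t v = x := by
    intro x hx
    obtain ⟨v, hv, rfl⟩ := Finset.mem_image.1 hx
    exact ⟨v, ⟨hv, rfl⟩, fun w hw => ht hw.1 hv hw.2⟩
  set e : Fin n → V := fun i => A.choose (fun v => t v = (o i : ℝ))
    (hex _ (o i).2) with he
  have heA : ∀ i, e i ∈ A := fun i => Finset.choose_mem (fun v => t v = ((o i : X) : ℝ)) A (hex _ (o i).2)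
  have het : ∀ i, t (e i) = (o i : ℝ) := fun i => Finset.choose_property (fun v => t v = ((o i : X) : ℝ)) A (hex _ (o i).2)
  have hemono : ∀ i j : Fin n, i < j → t (e i) < t (e j) := by
    intro i j hij
    rw [het, het]
    exact_mod_cast o.strictMono hij
  have heinj : Function.Injective e := by
    intro i j hij
    by_contra hne
    rcases lt_or_gt_of_ne hne with h | h
    · exact absurd (congrArg t hij) (ne_of_lt (hemono _ _ h))
    · exact absurd (congrArg t hij).symm (ne_of_lt (hemono _ _ h))
  set f : Fin n → ℝ := fun i => s (e i) with hf
  have hfinj : Function.Injective f := by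
    intro i j hij
    exact heinj (hs (heA i) (heA j) hij)
  set m₀ := Nat.sqrt (n - 1) with hm₀
  have hlt : m₀ * m₀ < n := by
    have := Nat.sqrt_le (n - 1)
    rw [hm₀]; omega
  have hm1 : n ≤ (m₀ + 1) * (m₀ + 1) := by
    have := Nat.lt_succ_sqrt (n - 1)
    simp only [Nat.succ_eq_add_one] at this
    rw [hm₀]; omega
  rcases erdos_szekeres (r := m₀) (s := m₀) hlt hfinj with ⟨T, hTcard, hTmono⟩ | ⟨T, hTcard, hTanti⟩
  all_goals {
    refine ⟨T.image e, ?_, ?_, ?_⟩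
    · intro v hv
      obtain ⟨i, _, rfl⟩ := Finset.mem_image.1 hv
      exact heA i
    · have hc : (T.image e).card = T.card := Finset.card_image_of_injective T heinj
      have : m₀ + 1 ≤ (T.image e).card := by omega
      calc n ≤ (m₀+1) * (m₀+1) := hm1
        _ ≤ (T.image e).card * (T.image e).card := Nat.mul_le_mul this this
    · first
      | · left
          intro u hu v hv htuv
          obtain ⟨i, hi, rfl⟩ := Finset.mem_image.1 hu
          obtain ⟨j, hj, rfl⟩ := Finset.mem_image.1 hv
          have hij : i < j := by
            rcases lt_trichotomy i j with h | h | h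
            · exact h
            · exact absurd htuv (by rw [h]; exact lt_irrefl _)
            · exact absurd (hemono _ _ h) (by intro hc; exact absurd htuv (by linarith))
          exact hTmono hi hj hij
      | · right
          intro u hu v hv htuv
          obtain ⟨i, hi, rfl⟩ := Finset.mem_image.1 hu
          obtain ⟨j, hj, rfl⟩ := Finset.mem_image.1 hv
          have hij : i < j := by
            rcases lt_trichotomy i j with h | h | h
            · exact h
            · exact absurd htuv (by rw [h]; exact lt_irrefl _)
            · exact absurd (hemono _ _ h) (by intro hc; exact absurd htuv (by linarith))
          exact hTanti hi hj hij }

end ErdosSzekeres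

section Interp
open Finset in
lemma exists_strictMono_interp (P : Finset (ℝ × ℝ))
    (hmono : ∀ p ∈ P, ∀ q ∈ P, p.1 < q.1 → p.2 < q.2)
    (hfun : ∀ p ∈ P, ∀ q ∈ P, p.1 = q.1 → p = q) :
    ∃ h : ℝ → ℝ, StrictMono h ∧ ∀ p ∈ P, h p.1 = p.2 := by
  induction P using Finset.strongInduction with
  | _ P ih =>
    rcases P.eq_empty_or_nonempty with rfl | hP
    · exact ⟨id, strictMono_id, by simp⟩
    obtain ⟨p₀, hp₀, hmax⟩ := P.exists_max_image Prod.fst hP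
    set P' := P.erase p₀ with hP'
    have hsub : P' ⊂ P := Finset.erase_ssubset hp₀
    have hmem' : ∀ p ∈ P', p ∈ P := fun p hp => Finset.mem_of_mem_erase hp
    have hlt : ∀ p ∈ P', p.1 < p₀.1 := by
      intro p hp
      rcases lt_or_eq_of_le (hmax p (hmem' p hp)) with h | h
      · exact h
      · exact absurd (hfun p (hmem' p hp) p₀ hp₀ h) (Finset.ne_of_mem_erase hp)
    have hlt2 : ∀ p ∈ P', p.2 < p₀.2 := fun p hp =>
      hmono p (hmem' p hp) p₀ hp₀ (hlt p hp)
    obtain ⟨h', hh'mono, hh'val⟩ := ih P' hsub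
      (fun p hp q hq => hmono p (hmem' p hp) q (hmem' q hq))
      (fun p hp q hq => hfun p (hmem' p hp) q (hmem' q hq))
    set a := p₀.1
    set bb := p₀.2
    rcases P'.eq_empty_or_nonempty with hP'e | hP'ne
    · refine ⟨fun x => bb + (x - a), fun x y hxy => by dsimp; linarith, ?_⟩
      intro p hp
      have : p = p₀ := by
        by_contra hne
        exact absurd (Finset.mem_erase.2 ⟨hne, hp⟩) (by rw [← hP', hP'e]; simp)
      rw [this]; ring
    · set σ₀ := (P'.image (fun p => (bb - p.2)/(a - p.1))).min'
        (hP'ne.image _) with hσ₀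
      have hσ₀pos : 0 < σ₀ := by
        obtain ⟨p, hp, hpe⟩ := Finset.mem_image.1
          ((P'.image (fun p => (bb - p.2)/(a - p.1))).min'_mem (hP'ne.image _))
        rw [hσ₀, ← hpe]
        exact div_pos (by linarith [hlt2 p hp]) (by linarith [hlt p hp])
      set σ := min σ₀ 1 with hσ
      have hσpos : 0 < σ := lt_min hσ₀pos one_pos
      have hσle : ∀ p ∈ P', σ * (a - p.1) ≤ bb - p.2 := by
        intro p hp
        have h1 : σ ≤ (bb - p.2)/(a - p.1) :=
          le_trans (min_le_left _ _)
            (Finset.min'_le _ _ (Finset.mem_image_of_mem _ hp))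
        have h2 : (0:ℝ) < a - p.1 := by linarith [hlt p hp]
        calc σ * (a - p.1) ≤ (bb - p.2)/(a - p.1) * (a - p.1) := by
              exact mul_le_mul_of_nonneg_right h1 (le_of_lt h2)
          _ = bb - p.2 := by field_simp
      refine ⟨fun x => if x < a then min (h' x) (bb + σ*(x - a)) else bb + (x - a),
        ?_, ?_⟩
      · intro x₁ x₂ hx
        dsimp only
        by_cases h2 : x₂ < a
        · have h1 : x₁ < a := lt_trans hx h2
          rw [if_pos h1, if_pos h2]
          exact lt_min (lt_of_le_of_lt (min_le_left _ _) (hh'mono hx))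
            (lt_of_le_of_lt (min_le_right _ _) (by nlinarith))
        · rw [if_neg h2]
          by_cases h1 : x₁ < a
          · rw [if_pos h1]
            have : min (h' x₁) (bb + σ*(x₁ - a)) ≤ bb + σ*(x₁ - a) := min_le_right _ _
            have h3 : bb + σ*(x₁ - a) < bb := by nlinarith
            have h4 : (bb:ℝ) ≤ bb + (x₂ - a) := by push_neg at h2; linarith
            linarith
          · rw [if_neg h1]
            push_neg at h1
            linarith
      · intro p hp
        by_cases hne : p = p₀
        · rw [hne]; dsimp only; rw [if_neg (lt_irrefl a)]; ring
        · have hp' : p ∈ P' := Finset.mem_erase.2 ⟨hne, hp⟩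
          have h1 : p.1 < a := hlt p hp'
          dsimp only
          rw [if_pos h1, hh'val p hp']
          have : p.2 ≤ bb + σ*(p.1 - a) := by
            have := hσle p hp'; nlinarith [hσle p hp']
          exact min_eq_left this

end Interp

section Geo
open Set Filter Topology

namespace Untangle

def affT (A B C D : ℝ) (b : Pt) (z : Pt) : Pt := (b.1 + A*z.1 + B*z.2, b.2 + C*z.1 + D*z.2)

lemma affT_inj {A B C D : ℝ} (h : A*D - B*C ≠ 0) (b : Pt) :
    Function.Injective (affT A B C D b) := by
  intro z w hzw
  have h1 : A*z.1 + B*z.2 = A*w.1 + B*w.2 := by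
    have := congrArg Prod.fst hzw; simp only [affT] at this; linarith
  have h2 : C*z.1 + D*z.2 = C*w.1 + D*w.2 := by
    have := congrArg Prod.snd hzw; simp only [affT] at this; linarith
  have e1 : (A*D - B*C) * z.1 = (A*D - B*C) * w.1 := by linear_combination D*h1 - B*h2
  have e2 : (A*D - B*C) * z.2 = (A*D - B*C) * w.2 := by linear_combination A*h2 - C*h1
  exact Prod.ext (mul_left_cancel₀ h e1) (mul_left_cancel₀ h e2)

lemma affT_affine (A B C D : ℝ) (b : Pt) (p q : Pt) {θ₁ θ₂ : ℝ} (h : θ₁ + θ₂ = 1) :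
    affT A B C D b (θ₁ • p + θ₂ • q) =
      θ₁ • affT A B C D b p + θ₂ • affT A B C D b q := by
  have h2 : θ₂ = 1 - θ₁ := by linarith
  subst h2
  apply Prod.ext <;>
    simp only [affT, Prod.smul_fst, Prod.smul_snd, Prod.fst_add, Prod.snd_add,
      smul_eq_mul] <;> ring

lemma affT_mem_segment {A B C D : ℝ} {b : Pt} {p q z : Pt} (hz : z ∈ segment ℝ p q) :
    affT A B C D b z ∈ segment ℝ (affT A B C D b p) (affT A B C D b q) := by
  obtain ⟨θ₁, θ₂, h₁, h₂, h₃, rfl⟩ := hz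
  exact ⟨θ₁, θ₂, h₁, h₂, h₃, (affT_affine A B C D b p q h₃).symm⟩

lemma affT_inv {A B C D : ℝ} (h : A*D - B*C ≠ 0) (b : Pt) :
    ∃ A' B' C' D' : ℝ, ∃ b' : Pt, A'*D' - B'*C' ≠ 0 ∧
      (∀ z, affT A' B' C' D' b' (affT A B C D b z) = z) := by
  set Δ := A*D - B*C with hΔ
  refine ⟨D/Δ, -B/Δ, -C/Δ, A/Δ,
    (-(D/Δ*b.1 + (-B/Δ)*b.2), -((-C/Δ)*b.1 + A/Δ*b.2)), ?_, ?_⟩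
  · field_simp
    intro hc
    rcases div_eq_zero_iff.1 hc with hc | hc
    · exact h (by linarith)
    · exact h (sq_eq_zero_iff.1 hc)
  · intro z
    apply Prod.ext <;> simp only [affT] <;> field_simp <;> ring

lemma affT_segment_iff {A B C D : ℝ} (h : A*D - B*C ≠ 0) (b : Pt) (p q z : Pt) :
    affT A B C D b z ∈ segment ℝ (affT A B C D b p) (affT A B C D b q) ↔
      z ∈ segment ℝ p q := by
  refine ⟨fun hz => ?_, affT_mem_segment⟩
  obtain ⟨A', B', C', D', b', hΔ', hinv⟩ := affT_inv h b
  have := affT_mem_segment (A := A') (B := B') (C := C') (D := D') (b := b') hz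
  rwa [hinv, hinv, hinv] at this

lemma crossFree_affT {V : Type*} {G : SimpleGraph V} {π : V → Pt}
    {A B C D : ℝ} (hdet : A*D - B*C ≠ 0) (b : Pt) (h : CrossFree G π) :
    CrossFree G (fun v => affT A B C D b (π v)) := by
  obtain ⟨h1, h2, h3⟩ := h
  refine ⟨(affT_inj hdet b).comp h1, ?_, ?_⟩
  · intro u v w huv hwu hwv hmem
    exact h2 u v w huv hwu hwv ((affT_segment_iff hdet b _ _ _).1 hmem)
  · intro u v x y huv hxy hne z hz
    obtain ⟨A', B', C', D', b', hΔ', hinv⟩ := affT_inv hdet b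
    have hzeq : affT A B C D b (affT A' B' C' D' b' z) = z := by
      -- need right inverse; derive from left inverse by injectivity
      have : affT A' B' C' D' b' (affT A B C D b (affT A' B' C' D' b' z)) =
          affT A' B' C' D' b' z := hinv _
      exact affT_inj hΔ' b' this
    set z₀ := affT A' B' C' D' b' z with hz₀
    rw [← hzeq] at hz
    have hmem := h3 u v x y huv hxy hne
      ⟨(affT_segment_iff hdet b _ _ _).1 hz.1, (affT_segment_iff hdet b _ _ _).1 hz.2⟩
    rw [← hzeq]
    obtain ⟨hm1, hm2⟩ := hmem
    constructor
    · rcases hm1 with h' | h'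
      · exact Or.inl (congrArg _ h')
      · exact Or.inr (congrArg _ (by simpa using h'))
    · rcases hm2 with h' | h'
      · exact Or.inl (congrArg _ h')
      · exact Or.inr (congrArg _ (by simpa using h'))

lemma mem_segment_iff_param {x y z : Pt} :
    z ∈ segment ℝ x y ↔ ∃ θ ∈ Icc (0:ℝ) 1, x + θ • (y - x) = z := by
  rw [segment_eq_image']; simp [Set.mem_image]

lemma norm_smul_le_one {θ : ℝ} (h : θ ∈ Icc (0:ℝ) 1) (v : Pt) : ‖θ • v‖ ≤ ‖v‖ := by
  rw [norm_smul, Real.norm_eq_abs, abs_of_nonneg h.1]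
  exact mul_le_of_le_one_left (norm_nonneg _) h.2

lemma seg_diff_bound {a b a' b' : Pt} {θ C : ℝ} (hθ : θ ∈ Icc (0:ℝ) 1)
    (ha : dist a' a < C) (hb : dist b' b < C) :
    ‖(a + θ • (b - a)) - (a' + θ • (b' - a'))‖ < 3*C := by
  have hC : 0 < C := lt_of_le_of_lt dist_nonneg ha
  have hid : (a + θ • (b - a)) - (a' + θ • (b' - a'))
      = (a - a') + θ • ((b - a) - (b' - a')) := by module
  have e1 : ‖a - a'‖ < C := by rw [← dist_eq_norm, dist_comm]; exact ha
  have e2 : ‖(b - a) - (b' - a')‖ ≤ ‖b - b'‖ + ‖a - a'‖ := by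
    have h2 : (b - a) - (b' - a') = (b - b') - (a - a') := by abel
    rw [h2]; exact norm_sub_le _ _
  have e3 : ‖b - b'‖ < C := by rw [← dist_eq_norm, dist_comm]; exact hb
  have e5 : ‖θ • ((b - a) - (b' - a'))‖ ≤ ‖(b - a) - (b' - a')‖ := norm_smul_le_one hθ _
  have b1 := norm_add_le (a - a') (θ • ((b - a) - (b' - a')))
  rw [← hid] at b1
  -- ‖a-a'‖ < C and ‖θ•(..)‖ ≤ ‖b-b'‖+‖a-a'‖ < 2C ... total < 3C ; we need < 2C? no:
  -- total ≤ ‖a-a'‖ + ‖b-b'‖ + ‖a-a'‖ < 3C. Use 3C bound instead.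
  linarith

lemma stable_not_mem_segment {p q r : Pt} (h : r ∉ segment ℝ p q) :
    ∃ D > 0, ∀ p' q' r' : Pt, dist p' p < D → dist q' q < D → dist r' r < D →
      r' ∉ segment ℝ p' q' := by
  have hcont : ContinuousOn (fun θ : ℝ => ‖(p + θ • (q - p)) - r‖) (Icc 0 1) := by fun_prop
  obtain ⟨θ₀, hθ₀, hmin⟩ := isCompact_Icc.exists_isMinOn (nonempty_Icc.2 zero_le_one) hcont
  set D := ‖(p + θ₀ • (q - p)) - r‖ with hD
  have hDpos : 0 < D := by
    rcases (norm_nonneg ((p + θ₀ • (q - p)) - r)).lt_or_eq with h' | h'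
    · exact h'
    · exact absurd (mem_segment_iff_param.2
        ⟨θ₀, hθ₀, sub_eq_zero.1 (norm_eq_zero.1 h'.symm)⟩) h
  refine ⟨D/8, by positivity, fun p' q' r' hp hq hr hmem => ?_⟩
  rw [mem_segment_iff_param] at hmem
  obtain ⟨θ, hθ, hz⟩ := hmem
  have hkey : D ≤ ‖(p + θ • (q - p)) - r‖ := isMinOn_iff.1 hmin θ hθ
  have h1 : ‖(p + θ • (q - p)) - (p' + θ • (q' - p'))‖ < 3*(D/8) :=
    seg_diff_bound hθ hp hq
  have h2 : (p + θ • (q - p)) - r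
      = ((p + θ • (q - p)) - (p' + θ • (q' - p'))) + (r' - r) := by rw [hz]; abel
  have h3 := norm_add_le ((p + θ • (q - p)) - (p' + θ • (q' - p'))) (r' - r)
  rw [← h2] at h3
  have h4 : ‖r' - r‖ < D/8 := by rw [← dist_eq_norm]; exact hr
  linarith

lemma stable_disjoint_segments {p q x y : Pt}
    (h : ∀ z, z ∈ segment ℝ p q → z ∉ segment ℝ x y) :
    ∃ D > 0, ∀ p' q' x' y' : Pt, dist p' p < D → dist q' q < D → dist x' x < D →
      dist y' y < D → ∀ z, z ∈ segment ℝ p' q' → z ∉ segment ℝ x' y' := by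
  have hcont : ContinuousOn
      (fun θ : ℝ × ℝ => ‖(p + θ.1 • (q - p)) - (x + θ.2 • (y - x))‖)
      (Icc 0 1 ×ˢ Icc 0 1) := by fun_prop
  obtain ⟨θ₀, hθ₀, hmin⟩ := (isCompact_Icc.prod isCompact_Icc).exists_isMinOn
    ((nonempty_Icc.2 zero_le_one).prod (nonempty_Icc.2 zero_le_one)) hcont
  set D := ‖(p + θ₀.1 • (q - p)) - (x + θ₀.2 • (y - x))‖ with hD
  have hDpos : 0 < D := by
    rcases (norm_nonneg ((p + θ₀.1 • (q - p)) - (x + θ₀.2 • (y - x)))).lt_or_eq with h' | h'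
    · exact h'
    · exfalso
      have he := sub_eq_zero.1 (norm_eq_zero.1 h'.symm)
      exact h _ (mem_segment_iff_param.2 ⟨θ₀.1, hθ₀.1, rfl⟩)
        (mem_segment_iff_param.2 ⟨θ₀.2, hθ₀.2, he.symm⟩)
  refine ⟨D/8, by positivity, fun p' q' x' y' hp hq hx hy z hz1 hz2 => ?_⟩
  rw [mem_segment_iff_param] at hz1 hz2
  obtain ⟨σ, hσ, hzσ⟩ := hz1
  obtain ⟨τ, hτ, hzτ⟩ := hz2
  have hkey : D ≤ ‖(p + σ • (q - p)) - (x + τ • (y - x))‖ :=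
    isMinOn_iff.1 hmin (σ, τ) ⟨hσ, hτ⟩
  have h1 : ‖(p + σ • (q - p)) - z‖ < 3*(D/8) := by
    rw [← hzσ]; exact seg_diff_bound hσ hp hq
  have h2 : ‖(x + τ • (y - x)) - z‖ < 3*(D/8) := by
    rw [← hzτ]; exact seg_diff_bound hτ hx hy
  have h3 : (p + σ • (q - p)) - (x + τ • (y - x))
      = ((p + σ • (q - p)) - z) - ((x + τ • (y - x)) - z) := by abel
  have h4 := norm_sub_le ((p + σ • (q - p)) - z) ((x + τ • (y - x)) - z)
  rw [← h3] at h4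
  linarith

lemma stable_shared {p q r : Pt} (hq : q ≠ p) (hr : r ≠ p)
    (h : segment ℝ p q ∩ segment ℝ p r ⊆ ({p} : Set Pt)) :
    ∃ D > 0, ∀ p' q' r' : Pt, dist p' p < D → dist q' q < D → dist r' r < D →
      segment ℝ p' q' ∩ segment ℝ p' r' ⊆ ({p'} : Set Pt) := by
  have hc1 : ContinuousOn (fun θ : ℝ => ‖θ • (q - p) - (r - p)‖) (Icc 0 1) := by fun_prop
  have hc2 : ContinuousOn (fun θ : ℝ => ‖(q - p) - θ • (r - p)‖) (Icc 0 1) := by fun_prop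
  obtain ⟨θ₁, hθ₁, hmin₁⟩ := isCompact_Icc.exists_isMinOn (nonempty_Icc.2 zero_le_one) hc1
  obtain ⟨θ₂, hθ₂, hmin₂⟩ := isCompact_Icc.exists_isMinOn (nonempty_Icc.2 zero_le_one) hc2
  set D₁ := ‖θ₁ • (q - p) - (r - p)‖ with hD₁
  set D₂ := ‖(q - p) - θ₂ • (r - p)‖ with hD₂
  have hD₁pos : 0 < D₁ := by
    rcases (norm_nonneg (θ₁ • (q - p) - (r - p))).lt_or_eq with h' | h'
    · exact h'
    · exfalso
      have he : p + θ₁ • (q - p) = r := by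
        have h0 : θ₁ • (q - p) - (r - p) = 0 := norm_eq_zero.1 h'.symm
        have := sub_eq_zero.1 h0
        rw [this]; abel
      have hr1 : r ∈ segment ℝ p q := mem_segment_iff_param.2 ⟨θ₁, hθ₁, he⟩
      have hr2 : r ∈ segment ℝ p r := right_mem_segment ℝ p r
      exact hr (h ⟨hr1, hr2⟩)
  have hD₂pos : 0 < D₂ := by
    rcases (norm_nonneg ((q - p) - θ₂ • (r - p))).lt_or_eq with h' | h'
    · exact h'
    · exfalso
      have he : p + θ₂ • (r - p) = q := by
        have h0 : (q - p) - θ₂ • (r - p) = 0 := norm_eq_zero.1 h'.symm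
        have := sub_eq_zero.1 h0
        rw [← this]; abel
      have hq1 : q ∈ segment ℝ p r := mem_segment_iff_param.2 ⟨θ₂, hθ₂, he⟩
      have hq2 : q ∈ segment ℝ p q := right_mem_segment ℝ p q
      exact hq (h ⟨hq2, hq1⟩)
  set D := min D₁ D₂ with hDdef
  have hDpos : 0 < D := lt_min hD₁pos hD₂pos
  refine ⟨D/8, by positivity, fun p' q' r' hp hq' hr' z hz => ?_⟩
  obtain ⟨hz1, hz2⟩ := hz
  rw [mem_segment_iff_param] at hz1 hz2
  obtain ⟨σ, hσ, hzσ⟩ := hz1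
  obtain ⟨τ, hτ, hzτ⟩ := hz2
  have hkeyeq : σ • (q' - p') = τ • (r' - p') :=
    add_left_cancel (hzσ.trans hzτ.symm)
  have m1 : ‖q - q'‖ < D/8 := by rw [← dist_eq_norm, dist_comm]; exact hq'
  have m2 : ‖r - r'‖ < D/8 := by rw [← dist_eq_norm, dist_comm]; exact hr'
  have m3 : ‖p - p'‖ < D/8 := by rw [← dist_eq_norm, dist_comm]; exact hp
  rcases eq_or_lt_of_le hσ.1 with hσ0 | hσpos
  · have hzp : z = p' := by rw [← hzσ, ← hσ0, zero_smul, add_zero]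
    simp [hzp]
  · exfalso
    by_cases hcase : τ ≤ σ
    · set θ := τ / σ with hθdef
      have hθmem : θ ∈ Icc (0:ℝ) 1 := ⟨div_nonneg hτ.1 hσpos.le, (div_le_one hσpos).2 hcase⟩
      have hzero : (q' - p') - θ • (r' - p') = 0 := by
        have hs : σ • ((q' - p') - θ • (r' - p')) = 0 := by
          rw [smul_sub, hkeyeq, smul_smul, show σ * θ = τ by
            rw [hθdef]; field_simp]
          exact sub_self _
        rcases smul_eq_zero.1 hs with h' | h'
        · exact absurd h' (ne_of_gt hσpos)
        · exact h'
      have hkey2 : D₂ ≤ ‖(q - p) - θ • (r - p)‖ := isMinOn_iff.1 hmin₂ θ hθmem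
      have hid : (q - p) - θ • (r - p)
          = ((q - q') - (p - p')) - θ • ((r - r') - (p - p'))
            + ((q' - p') - θ • (r' - p')) := by module
      rw [hzero, add_zero] at hid
      have n1 : ‖(q - q') - (p - p')‖ ≤ ‖q - q'‖ + ‖p - p'‖ := norm_sub_le _ _
      have n2 : ‖(r - r') - (p - p')‖ ≤ ‖r - r'‖ + ‖p - p'‖ := norm_sub_le _ _
      have n3 : ‖θ • ((r - r') - (p - p'))‖ ≤ ‖(r - r') - (p - p')‖ :=
        norm_smul_le_one hθmem _
      have n4 := norm_sub_le ((q - q') - (p - p')) (θ • ((r - r') - (p - p')))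
      rw [← hid] at n4
      have hD2 : D ≤ D₂ := min_le_right _ _
      linarith
    · push_neg at hcase
      have hτpos : 0 < τ := lt_of_le_of_lt hσ.1 hcase
      set θ := σ / τ with hθdef
      have hθmem : θ ∈ Icc (0:ℝ) 1 :=
        ⟨div_nonneg hσ.1 hτpos.le, (div_le_one hτpos).2 hcase.le⟩
      have hzero : θ • (q' - p') - (r' - p') = 0 := by
        have hs : τ • (θ • (q' - p') - (r' - p')) = 0 := by
          rw [smul_sub, smul_smul, show τ * θ = σ by
            rw [hθdef]; field_simp, hkeyeq]
          exact sub_self _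
        rcases smul_eq_zero.1 hs with h' | h'
        · exact absurd h' (ne_of_gt hτpos)
        · exact h'
      have hkey1 : D₁ ≤ ‖θ • (q - p) - (r - p)‖ := isMinOn_iff.1 hmin₁ θ hθmem
      have hid : θ • (q - p) - (r - p)
          = θ • ((q - q') - (p - p')) - ((r - r') - (p - p'))
            + (θ • (q' - p') - (r' - p')) := by module
      rw [hzero, add_zero] at hid
      have n1 : ‖(q - q') - (p - p')‖ ≤ ‖q - q'‖ + ‖p - p'‖ := norm_sub_le _ _
      have n2 : ‖(r - r') - (p - p')‖ ≤ ‖r - r'‖ + ‖p - p'‖ := norm_sub_le _ _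
      have n3 : ‖θ • ((q - q') - (p - p'))‖ ≤ ‖(q - q') - (p - p')‖ :=
        norm_smul_le_one hθmem _
      have n4 := norm_sub_le (θ • ((q - q') - (p - p'))) ((r - r') - (p - p'))
      rw [← hid] at n4
      have hD1 : D ≤ D₁ := min_le_left _ _
      linarith

lemma crossfree_perturb {V : Type*} [Fintype V] {G : SimpleGraph V} {δ : V → Pt}
    (h : CrossFree G δ) (w : V → Pt) :
    ∃ ε : ℝ, 0 < ε ∧ CrossFree G (fun v => δ v + ε • w v) := by
  classical
  obtain ⟨h1, h2, h3⟩ := h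
  set M : ℝ := 1 + ∑ v : V, ‖w v‖ with hM
  have hMpos : 0 < M := by
    have : (0:ℝ) ≤ ∑ v : V, ‖w v‖ := Finset.sum_nonneg (fun i _ => norm_nonneg _)
    linarith
  have hwle : ∀ v, ‖w v‖ < M := by
    intro v
    have : ‖w v‖ ≤ ∑ v : V, ‖w v‖ :=
      Finset.single_le_sum (f := fun v => ‖w v‖) (fun i _ => norm_nonneg _)
        (Finset.mem_univ v)
    linarith
  have hdist : ∀ C : ℝ, 0 < C →
      ∀ᶠ ε in 𝓝[>] (0:ℝ), ∀ v, dist (δ v + ε • w v) (δ v) < C := by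
    intro C hC
    have hmem : Ioo (0:ℝ) (C / M) ∈ 𝓝[>] (0:ℝ) :=
      Ioo_mem_nhdsGT_of_mem ⟨le_refl 0, by positivity⟩
    filter_upwards [hmem] with ε hε v
    have hde : dist (δ v + ε • w v) (δ v) = ε * ‖w v‖ := by
      rw [dist_eq_norm, add_sub_cancel_left, norm_smul, Real.norm_eq_abs,
        abs_of_pos hε.1]
    rw [hde]
    have hlt : ε * M < C := by
      have := (lt_div_iff₀ hMpos).1 hε.2
      linarith
    nlinarith [hwle v, norm_nonneg (w v), hε.1]
  have E1 : ∀ᶠ ε in 𝓝[>] (0:ℝ), Function.Injective (fun v => δ v + ε • w v) := by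
    have key : ∀ p : V × V, ∀ᶠ ε in 𝓝[>] (0:ℝ),
        (δ p.1 + ε • w p.1 = δ p.2 + ε • w p.2 → p.1 = p.2) := by
      rintro ⟨u, v⟩
      by_cases huv : u = v
      · exact Filter.Eventually.of_forall (fun ε _ => huv)
      · have hd : 0 < dist (δ u) (δ v) := dist_pos.2 (fun e => huv (h1 e))
        filter_upwards [hdist (dist (δ u) (δ v) / 2) (by positivity)] with ε hε heq
        exfalso
        have t1 := hε u
        have t2 := hε v
        have h6 : dist (δ u + ε • w u) (δ v) = dist (δ v + ε • w v) (δ v) := by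
          rw [heq]
        have h7 := dist_triangle (δ u) (δ u + ε • w u) (δ v)
        rw [dist_comm (δ u) (δ u + ε • w u)] at h7
        linarith
    have := eventually_all.2 key
    filter_upwards [this] with ε hε a b hab
    exact hε (a, b) hab
  have E2 : ∀ᶠ ε in 𝓝[>] (0:ℝ), ∀ u v x : V, G.Adj u v → x ≠ u → x ≠ v →
      (δ x + ε • w x) ∉ segment ℝ (δ u + ε • w u) (δ v + ε • w v) := by
    rw [eventually_all]; intro u
    rw [eventually_all]; intro v
    rw [eventually_all]; intro x
    by_cases hadj : G.Adj u v
    · by_cases hxu : x = u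
      · exact Filter.Eventually.of_forall (fun ε _ h' _ => absurd hxu h')
      · by_cases hxv : x = v
        · exact Filter.Eventually.of_forall (fun ε _ _ h' => absurd hxv h')
        · obtain ⟨D, hD, hstab⟩ := stable_not_mem_segment (h2 u v x hadj hxu hxv)
          filter_upwards [hdist D hD] with ε hε _ _ _
          exact hstab _ _ _ (hε u) (hε v) (hε x)
    · exact Filter.Eventually.of_forall (fun ε h' => absurd h' hadj)
  have E3 : ∀ᶠ ε in 𝓝[>] (0:ℝ), ∀ u v x y : V, G.Adj u v → G.Adj x y →
      s(u,v) ≠ s(x,y) →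
      segment ℝ (δ u + ε • w u) (δ v + ε • w v) ∩
        segment ℝ (δ x + ε • w x) (δ y + ε • w y) ⊆
      ({δ u + ε • w u, δ v + ε • w v} : Set Pt) ∩
        ({δ x + ε • w x, δ y + ε • w y} : Set Pt) := by
    rw [eventually_all]; intro u
    rw [eventually_all]; intro v
    rw [eventually_all]; intro x
    rw [eventually_all]; intro y
    by_cases hadj : G.Adj u v
    swap
    · exact Filter.Eventually.of_forall (fun ε h' => absurd h' hadj)
    by_cases hadj2 : G.Adj x y
    swap
    · exact Filter.Eventually.of_forall (fun ε _ h' => absurd h' hadj2)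
    by_cases hne : s(u,v) = s(x,y)
    · exact Filter.Eventually.of_forall (fun ε _ _ h' => absurd hne h')
    have huv : u ≠ v := hadj.ne
    have hxy : x ≠ y := hadj2.ne
    have hnotboth : ¬(u = x ∧ v = y) := fun ⟨e1, e2⟩ => hne (by rw [e1, e2])
    have hnotcross : ¬(u = y ∧ v = x) := fun ⟨e1, e2⟩ =>
      hne (by rw [e1, e2, Sym2.eq_swap])
    by_cases hux : u = x
    · subst hux
      have hvy : v ≠ y := fun e => hnotboth ⟨rfl, e⟩
      have hold : segment ℝ (δ u) (δ v) ∩ segment ℝ (δ u) (δ y) ⊆ ({δ u} : Set Pt) := by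
        intro z hz
        have hin := h3 u v u y hadj hadj2 hne hz
        simp only [Set.mem_insert_iff, Set.mem_singleton_iff, Set.mem_inter_iff] at hin ⊢
        rcases hin.1 with e1 | e1
        · exact e1
        · rcases hin.2 with e2 | e2
          · exact e2
          · exact absurd (h1 (e1 ▸ e2 : δ v = δ y)) hvy
      have hqp : δ v ≠ δ u := fun e => huv (h1 e).symm
      have hrp : δ y ≠ δ u := fun e => hxy (h1 e).symm
      obtain ⟨D, hD, hstab⟩ := stable_shared hqp hrp hold
      filter_upwards [hdist D hD] with ε hε _ _ _ z hz
      have hz' := hstab _ _ _ (hε u) (hε v) (hε y) hz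
      rw [Set.mem_singleton_iff] at hz'
      rw [hz']
      exact ⟨Or.inl rfl, Or.inl rfl⟩
    by_cases huy : u = y
    · subst huy
      have hvx : v ≠ x := fun e => hnotcross ⟨rfl, e⟩
      have hold : segment ℝ (δ u) (δ v) ∩ segment ℝ (δ u) (δ x) ⊆ ({δ u} : Set Pt) := by
        intro z hz
        have hz2 : z ∈ segment ℝ (δ x) (δ u) := by rw [segment_symm]; exact hz.2
        have hin := h3 u v x u hadj hadj2 hne ⟨hz.1, hz2⟩
        simp only [Set.mem_insert_iff, Set.mem_singleton_iff, Set.mem_inter_iff] at hin ⊢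
        rcases hin.1 with e1 | e1
        · exact e1
        · rcases hin.2 with e2 | e2
          · exact absurd (h1 (e1 ▸ e2 : δ v = δ x)) hvx
          · exact e2
      have hqp : δ v ≠ δ u := fun e => huv (h1 e).symm
      have hrp : δ x ≠ δ u := fun e => hux (h1 e).symm
      obtain ⟨D, hD, hstab⟩ := stable_shared hqp hrp hold
      filter_upwards [hdist D hD] with ε hε _ _ _ z hz
      have hz2 : z ∈ segment ℝ (δ u + ε • w u) (δ x + ε • w x) := by
        rw [segment_symm]; exact hz.2
      have hz' := hstab _ _ _ (hε u) (hε v) (hε x) ⟨hz.1, hz2⟩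
      rw [Set.mem_singleton_iff] at hz'
      rw [hz']
      exact ⟨Or.inl rfl, Or.inr rfl⟩
    by_cases hvx : v = x
    · subst hvx
      have hvy : v ≠ y := hxy
      have hold : segment ℝ (δ v) (δ u) ∩ segment ℝ (δ v) (δ y) ⊆ ({δ v} : Set Pt) := by
        intro z hz
        have hz1 : z ∈ segment ℝ (δ u) (δ v) := by rw [segment_symm]; exact hz.1
        have hin := h3 u v v y hadj hadj2 hne ⟨hz1, hz.2⟩
        simp only [Set.mem_insert_iff, Set.mem_singleton_iff, Set.mem_inter_iff] at hin ⊢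
        rcases hin.1 with e1 | e1
        · rcases hin.2 with e2 | e2
          · exact absurd (h1 (e1 ▸ e2 : δ u = δ v)) huv
          · exact absurd ⟨h1 (e1 ▸ e2 : δ u = δ y), rfl⟩ hnotcross
        · exact e1
      have hqp : δ u ≠ δ v := fun e => huv (h1 e.symm).symm
      have hrp : δ y ≠ δ v := fun e => hvy (h1 e).symm
      obtain ⟨D, hD, hstab⟩ := stable_shared hqp hrp hold
      filter_upwards [hdist D hD] with ε hε _ _ _ z hz
      have hz1 : z ∈ segment ℝ (δ v + ε • w v) (δ u + ε • w u) := by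
        rw [segment_symm]; exact hz.1
      have hz' := hstab _ _ _ (hε v) (hε u) (hε y) ⟨hz1, hz.2⟩
      rw [Set.mem_singleton_iff] at hz'
      rw [hz']
      exact ⟨Or.inr rfl, Or.inl rfl⟩
    by_cases hvy : v = y
    · subst hvy
      have hold : segment ℝ (δ v) (δ u) ∩ segment ℝ (δ v) (δ x) ⊆ ({δ v} : Set Pt) := by
        intro z hz
        have hz1 : z ∈ segment ℝ (δ u) (δ v) := by rw [segment_symm]; exact hz.1
        have hz2 : z ∈ segment ℝ (δ x) (δ v) := by rw [segment_symm]; exact hz.2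
        have hin := h3 u v x v hadj hadj2 hne ⟨hz1, hz2⟩
        simp only [Set.mem_insert_iff, Set.mem_singleton_iff, Set.mem_inter_iff] at hin ⊢
        rcases hin.1 with e1 | e1
        · rcases hin.2 with e2 | e2
          · exact absurd (h1 (e1 ▸ e2 : δ u = δ x)) hux
          · exact absurd (h1 (e1 ▸ e2 : δ u = δ v)) huv
        · exact e1
      have hqp : δ u ≠ δ v := fun e => huv (h1 e.symm).symm
      have hrp : δ x ≠ δ v := fun e => hvx (h1 e.symm)
      obtain ⟨D, hD, hstab⟩ := stable_shared hqp hrp hold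
      filter_upwards [hdist D hD] with ε hε _ _ _ z hz
      have hz1 : z ∈ segment ℝ (δ v + ε • w v) (δ u + ε • w u) := by
        rw [segment_symm]; exact hz.1
      have hz2 : z ∈ segment ℝ (δ v + ε • w v) (δ x + ε • w x) := by
        rw [segment_symm]; exact hz.2
      have hz' := hstab _ _ _ (hε v) (hε u) (hε x) ⟨hz1, hz2⟩
      rw [Set.mem_singleton_iff] at hz'
      rw [hz']
      exact ⟨Or.inr rfl, Or.inr rfl⟩
    · -- all four vertices distinct
      have hold : ∀ z, z ∈ segment ℝ (δ u) (δ v) → z ∉ segment ℝ (δ x) (δ y) := by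
        intro z hz1 hz2
        have hin := h3 u v x y hadj hadj2 hne ⟨hz1, hz2⟩
        simp only [Set.mem_insert_iff, Set.mem_singleton_iff, Set.mem_inter_iff] at hin
        rcases hin.1 with e1 | e1 <;> rcases hin.2 with e2 | e2
        · exact hux (h1 (e1 ▸ e2))
        · exact huy (h1 (e1 ▸ e2))
        · exact hvx (h1 (e1 ▸ e2))
        · exact hvy (h1 (e1 ▸ e2))
      obtain ⟨D, hD, hstab⟩ := stable_disjoint_segments hold
      filter_upwards [hdist D hD] with ε hε _ _ _ z hz
      exact absurd hz.2 (hstab _ _ _ _ (hε u) (hε v) (hε x) (hε y) z hz.1)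
  obtain ⟨ε, hε⟩ := ((E1.and (E2.and E3)).and self_mem_nhdsWithin).exists
  exact ⟨ε, hε.2, hε.1.1, hε.1.2.1, hε.1.2.2⟩



end Untangle
end Geo


open Filter Topology Untangle in
/-- For every planar graph `G`, `fix G ≥ √(free G)`. -/
theorem fix_ge_sqrt_free {V : Type*} [Fintype V] (G : SimpleGraph V) (hG : IsPlanarG G) :
    Real.sqrt (freeNum G) ≤ (fixNum G : ℝ) := by
  classical
  have hfixset : {m | ∃ π : V → Pt, Function.Injective π ∧ m = fixDrawing G π}.Nonempty := by
    refine ⟨fixDrawing G (fun v => (((Fintype.equivFin V v : ℕ) : ℝ), 0)),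
      fun v => (((Fintype.equivFin V v : ℕ) : ℝ), 0), ?_, rfl⟩
    intro a b hab
    have h1 : ((Fintype.equivFin V a : ℕ) : ℝ) = ((Fintype.equivFin V b : ℕ) : ℝ) :=
      congrArg Prod.fst hab
    exact (Fintype.equivFin V).injective (Fin.ext (by exact_mod_cast h1))
  obtain ⟨π, hπinj, hfixeq⟩ := Nat.sInf_mem hfixset
  have hfix : fixNum G = fixDrawing G π := hfixeq
  rw [hfix]
  by_cases hfree0 : freeNum G = 0
  · rw [hfree0]
    simpa using Nat.cast_nonneg (fixDrawing G π)
  have hfreebdd : BddAbove {m | ∃ (πh : V → Pt) (S : Set V), IsFreeSet G πh S ∧ m = S.ncard} := by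
    refine ⟨Fintype.card V, fun m hm => ?_⟩
    obtain ⟨_, S, _, rfl⟩ := hm
    calc S.ncard ≤ (Set.univ : Set V).ncard :=
          Set.ncard_le_ncard (Set.subset_univ S) Set.finite_univ
      _ = Fintype.card V := by rw [Set.ncard_univ, Nat.card_eq_fintype_card]
  have hfreene : {m | ∃ (πh : V → Pt) (S : Set V), IsFreeSet G πh S ∧ m = S.ncard}.Nonempty := by
    by_contra hemp
    rw [Set.not_nonempty_iff_eq_empty] at hemp
    exact hfree0 (by rw [show freeNum G = sSup {m | ∃ (πh : V → Pt) (S : Set V),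
      IsFreeSet G πh S ∧ m = S.ncard} from rfl, hemp]; simp)
  have hk : freeNum G ∈ {m | ∃ (πh : V → Pt) (S : Set V), IsFreeSet G πh S ∧ m = S.ncard} :=
    Nat.sSup_mem hfreene hfreebdd
  obtain ⟨πh, S, hfreeS, hkeq⟩ := hk
  obtain ⟨hCF, a, d, t, hd0, hline, hmove⟩ := hfreeS
  have htinj : Set.InjOn t S := by
    intro u hu v hv he
    apply hCF.1
    rw [hline u hu, hline v hv, he]
  -- choose a generic linear functional injective on vertex images
  obtain ⟨c, hc⟩ : ∃ c : ℝ, Function.Injective (fun v : V => (π v).1 + c * (π v).2) := by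
    have hfin : ∀ p : V × V, p.1 ≠ p.2 →
        {c : ℝ | (π p.1).1 + c * (π p.1).2 = (π p.2).1 + c * (π p.2).2}.Finite := by
      intro p hp
      by_cases hβ : (π p.1).2 - (π p.2).2 = 0
      · have hα : (π p.1).1 - (π p.2).1 ≠ 0 := by
          intro hα
          exact hp (hπinj (Prod.ext (by linarith) (by linarith)))
        have hempty : {c : ℝ | (π p.1).1 + c * (π p.1).2
            = (π p.2).1 + c * (π p.2).2} = ∅ := by
          ext c
          simp only [Set.mem_setOf_eq, Set.mem_empty_iff_false, iff_false]
          intro hcc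
          apply hα
          linear_combination hcc - c * hβ
        rw [hempty]; exact Set.finite_empty
      · apply Set.Finite.subset (Set.finite_singleton
          (((π p.2).1 - (π p.1).1) / ((π p.1).2 - (π p.2).2)))
        intro c hcc
        simp only [Set.mem_setOf_eq] at hcc
        simp only [Set.mem_singleton_iff]
        rw [eq_div_iff hβ]
        linear_combination hcc
    have hBadfin : (⋃ p : V × V, {c : ℝ | p.1 ≠ p.2 ∧
        ((π p.1).1 + c * (π p.1).2 = (π p.2).1 + c * (π p.2).2)}).Finite := by
      apply Set.finite_iUnion
      intro p
      by_cases hp : p.1 = p.2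
      · exact Set.finite_empty.subset (fun c hc => absurd hp hc.1)
      · exact (hfin p hp).subset (fun c hc => hc.2)
    obtain ⟨c, hcB⟩ := hBadfin.infinite_compl.nonempty
    refine ⟨c, fun u v huv => ?_⟩
    by_contra hne
    exact hcB (Set.mem_iUnion.2 ⟨(u, v), hne, huv⟩)
  set sv : V → ℝ := fun v => (π v).1 + c * (π v).2 with hsv
  -- Erdős–Szekeres on the free set
  set A : Finset V := S.toFinset with hA
  have hAS : ∀ v, v ∈ A ↔ v ∈ S := fun v => Set.mem_toFinset
  have hAcard : A.card = S.ncard := (Set.ncard_eq_toFinset_card' S).symm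
  obtain ⟨B, hBsub, hBcard, hBmono⟩ := erdos_szekeres_finset A t sv
    (fun u hu v hv he => htinj ((hAS u).1 (by exact_mod_cast hu))
      ((hAS v).1 (by exact_mod_cast hv)) he)
    (fun u _ v _ he => hc he)
  have hBS : ∀ v ∈ B, v ∈ S := fun v hv => (hAS v).1 (hBsub hv)
  -- unify increasing/decreasing via a sign
  obtain ⟨e, he2, hBm⟩ : ∃ e : ℝ, e^2 = 1 ∧
      (∀ u ∈ B, ∀ v ∈ B, t u < t v → e * sv u < e * sv v) := by
    rcases hBmono with h | h
    · exact ⟨1, by norm_num, fun u hu v hv hlt => by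
        simpa using h u hu v hv hlt⟩
    · exact ⟨-1, by norm_num, fun u hu v hv hlt => by
        have := h u hu v hv hlt; nlinarith⟩
  have he0 : e ≠ 0 := by intro h0; rw [h0] at he2; norm_num at he2
  -- strictly monotone interpolation through (t v, e * sv v), v ∈ B
  obtain ⟨h, hhmono, hhval⟩ := exists_strictMono_interp
    (B.image (fun v => (t v, e * sv v)))
    (by
      intro p hp q hq hpq
      obtain ⟨u, hu, rfl⟩ := Finset.mem_image.1 hp
      obtain ⟨v, hv, rfl⟩ := Finset.mem_image.1 hq
      exact hBm u hu v hv hpq)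
    (by
      intro p hp q hq hpq
      obtain ⟨u, hu, rfl⟩ := Finset.mem_image.1 hp
      obtain ⟨v, hv, rfl⟩ := Finset.mem_image.1 hq
      rw [htinj (hBS u hu) (hBS v hv) hpq])
  have hhB : ∀ v ∈ B, h (t v) = e * sv v := fun v hv =>
    hhval _ (Finset.mem_image_of_mem _ hv)
  -- move the free set to the interpolated positions
  obtain ⟨δ, hδCF, hδval⟩ := hmove (fun v => h (t v))
    (fun u _ v _ hlt => hhmono hlt)
  -- normalize: map the line to the x-axis
  set n : ℝ := d.1 * d.1 + d.2 * d.2 with hn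
  have hnpos : 0 < n := by
    by_cases h1 : d.1 = 0
    · have h2 : d.2 ≠ 0 := fun h2 => hd0 (Prod.ext h1 h2)
      nlinarith [mul_self_pos.2 h2, mul_self_nonneg d.1]
    · nlinarith [mul_self_pos.2 h1, mul_self_nonneg d.2]
  have hn0 : n ≠ 0 := ne_of_gt hnpos
  set bL : Pt := (-(d.1/n*a.1 + d.2/n*a.2), -(-d.2/n*a.1 + d.1/n*a.2)) with hbL
  have hLdet : (d.1/n)*(d.1/n) - (d.2/n)*(-d.2/n) ≠ 0 := by
    have h1 : (d.1/n)*(d.1/n) - (d.2/n)*(-d.2/n) = (d.1/n)*(d.1/n) + (d.2/n)*(d.2/n) := by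
      ring
    rw [h1]
    by_cases hd1 : d.1 = 0
    · have hd2 : d.2 ≠ 0 := fun hh => hd0 (Prod.ext hd1 hh)
      have hq : d.2/n ≠ 0 := div_ne_zero hd2 hn0
      nlinarith [mul_self_pos.2 hq, mul_self_nonneg (d.1/n)]
    · have hq : d.1/n ≠ 0 := div_ne_zero hd1 hn0
      nlinarith [mul_self_pos.2 hq, mul_self_nonneg (d.2/n)]
  have hLline : ∀ τ : ℝ, affT (d.1/n) (d.2/n) (-d.2/n) (d.1/n) bL (a + τ • d) = (τ, 0) := by
    intro τ
    apply Prod.ext <;>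
      simp only [affT, hbL, Prod.fst_add, Prod.snd_add, Prod.smul_fst, Prod.smul_snd,
        smul_eq_mul] <;>
      field_simp <;> ring
  set δ₁ : V → Pt := fun v => affT (d.1/n) (d.2/n) (-d.2/n) (d.1/n) bL (δ v) with hδ₁
  have hδ₁CF : CrossFree G δ₁ := crossFree_affT hLdet bL hδCF
  have hδ₁B : ∀ v ∈ B, δ₁ v = (e * sv v, 0) := by
    intro v hv
    rw [hδ₁]
    dsimp only
    rw [hδval v (hBS v hv), hLline, hhB v hv]
  -- perturb
  set w : V → Pt := fun v => if v ∈ B then ((0 : ℝ), (π v).2) else (0, 0) with hw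
  obtain ⟨ε, hεpos, hCF2⟩ := crossfree_perturb hδ₁CF w
  have hε0 : ε ≠ 0 := ne_of_gt hεpos
  have hδ₂B : ∀ v ∈ B, δ₁ v + ε • w v = (e * sv v, ε * (π v).2) := by
    intro v hv
    rw [hδ₁B v hv, hw]
    dsimp only
    rw [if_pos hv]
    apply Prod.ext <;> simp
  -- final affine map
  have hFdet : e * (1/ε) - (-(c/ε)) * 0 ≠ 0 := by
    have : e * (1/ε) - (-(c/ε)) * 0 = e/ε := by field_simp; ring
    rw [this]
    exact div_ne_zero he0 hε0
  set π' : V → Pt := fun v => affT e (-(c/ε)) 0 (1/ε) ((0:ℝ), (0:ℝ))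
    ((fun v => δ₁ v + ε • w v) v) with hπ'
  have hπ'CF : CrossFree G π' := crossFree_affT hFdet _ hCF2
  have hagree : ∀ v ∈ B, π' v = π v := by
    intro v hv
    rw [hπ']
    dsimp only
    rw [hδ₂B v hv]
    have hsvv : sv v = (π v).1 + c * (π v).2 := rfl
    have hc1 : (-(c/ε)) * (ε * (π v).2) = -(c * (π v).2) := by
      field_simp
    have hc2 : (1/ε) * (ε * (π v).2) = (π v).2 := by field_simp
    apply Prod.ext
    · show (0:ℝ) + e * (e * sv v) + (-(c/ε)) * (ε * (π v).2) = (π v).1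
      rw [hc1, hsvv]
      linear_combination ((π v).1 + c * (π v).2) * he2
    · show (0:ℝ) + 0 * (e * sv v) + (1/ε) * (ε * (π v).2) = (π v).2
      rw [hc2]; ring
  -- count the fixed vertices
  have hsubfix : (↑B : Set V) ⊆ {v | π' v = π v} := fun v hv => hagree v hv
  have hcount : B.card ≤ Nat.card {v : V | π' v = π v} := by
    rw [Nat.card_coe_set_eq]
    calc B.card = (↑B : Set V).ncard := (Set.ncard_coe_finset B).symm
      _ ≤ {v : V | π' v = π v}.ncard :=
          Set.ncard_le_ncard hsubfix (Set.toFinite _)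
  have hfixbdd : BddAbove {m | ∃ π'' : V → Pt, CrossFree G π'' ∧
      m = Nat.card {v : V | π'' v = π v}} := by
    refine ⟨Fintype.card V, fun m hm => ?_⟩
    obtain ⟨π'', _, rfl⟩ := hm
    rw [Nat.card_coe_set_eq]
    calc {v : V | π'' v = π v}.ncard ≤ (Set.univ : Set V).ncard :=
          Set.ncard_le_ncard (Set.subset_univ _) Set.finite_univ
      _ = Fintype.card V := by rw [Set.ncard_univ, Nat.card_eq_fintype_card]
  have hfixge : B.card ≤ fixDrawing G π := by
    refine le_trans hcount (le_csSup hfixbdd ?_)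
    exact ⟨π', hπ'CF, rfl⟩
  -- conclude
  have hfinal : freeNum G ≤ fixDrawing G π * fixDrawing G π := by
    calc freeNum G = S.ncard := hkeq
      _ = A.card := hAcard.symm
      _ ≤ B.card * B.card := hBcard
      _ ≤ fixDrawing G π * fixDrawing G π := Nat.mul_le_mul hfixge hfixge
  have hcast : (freeNum G : ℝ) ≤ ((fixDrawing G π : ℝ)) ^ 2 := by
    have h2 : (freeNum G : ℝ) ≤ ((fixDrawing G π * fixDrawing G π : ℕ) : ℝ) :=
      Nat.cast_le.2 hfinal
    push_cast at h2
    rw [sq]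
    exact h2
  calc Real.sqrt (freeNum G) ≤ Real.sqrt ((fixDrawing G π : ℝ) ^ 2) :=
        Real.sqrt_le_sqrt hcast
    _ = (fixDrawing G π : ℝ) := Real.sqrt_sq (Nat.cast_nonneg _)
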